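/- (Part of Theorem 6.1.) Let (D1, M) be a consistent periodic first-derivative SBP operator with diagonal mass matrix (M symmetric positive definite and diagonal, M·D1 + D1ᵀ·M = 0, D1·𝟙 = 0). Let ρ ∈ ℝ^m have strictly positive components and K ∈ ℝ^m have strictly positive components; define σ(ε)ᵢ = exp(Kᵢ·εᵢ) − 1 for ε ∈ ℝ^m. Let ε, u : ℝ → ℝ^m be differentiable and satisfy ∂ₜε = D1·u, ∂ₜuᵢ = ρᵢ⁻¹·(D1·σ(ε))ᵢ for all t and all i. Then the discrete total momentum 𝟙ᵀ·M·(ρ∘u(t)) is constant in t, where ∘ denotes the componentwise product. -/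

import Mathlib

open Matrix

/-- For the semidiscretized variable-coefficient p-system
`∂ₜε = D1 u`, `∂ₜuᵢ = ρᵢ⁻¹ (D1 σ(ε))ᵢ` with `σ(ε)ᵢ = exp(Kᵢ εᵢ) − 1`
and `(D1, M)` a consistent periodic first-derivative SBP operator with
diagonal mass matrix, the discrete total momentum `𝟙ᵀ·M·(ρ∘u(t))` is constant. -/
theorem p_system_conserves_total_momentum
    (m : ℕ) (D1 M : Matrix (Fin m) (Fin m) ℝ)
    (hM : M.PosDef) (hMdiag : M.IsDiag)
    (hD1 : M * D1 + D1ᵀ * M = 0)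
    (hD1cons : D1 *ᵥ (1 : Fin m → ℝ) = 0)
    (ρ K : Fin m → ℝ)
    (hρ : ∀ i, 0 < ρ i) (hK : ∀ i, 0 < K i)
    (ε u : ℝ → Fin m → ℝ)
    (hε : ∀ t, HasDerivAt ε (D1 *ᵥ u t) t)
    (hu : ∀ t, HasDerivAt u
      (fun i => (ρ i)⁻¹ * (D1 *ᵥ (fun j => Real.exp (K j * ε t j) - 1)) i) t) :
    ∀ t₁ t₂ : ℝ,
      (1 : Fin m → ℝ) ⬝ᵥ (M *ᵥ (ρ * u t₁)) = (1 : Fin m → ℝ) ⬝ᵥ (M *ᵥ (ρ * u t₂)) := by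
  -- The key matrix identity: 𝟙ᵀ (M D1) = 0
  have hMD1 : (1 : Fin m → ℝ) ᵥ* (M * D1) = 0 := by
    have h1 : M * D1 = -(D1ᵀ * M) := by
      rw [← sub_eq_zero]; rw [sub_neg_eq_add]; exact hD1
    rw [h1, vecMul_neg, ← vecMul_vecMul, vecMul_transpose, hD1cons, zero_vecMul, neg_zero]
  -- The momentum function has derivative 0 everywhere
  have hf : ∀ t, HasDerivAt (fun t => (1 : Fin m → ℝ) ⬝ᵥ (M *ᵥ (ρ * u t))) 0 t := by
    intro t
    set σ : Fin m → ℝ := fun j => Real.exp (K j * ε t j) - 1 with hσ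
    have hmain : HasDerivAt (fun t => (1 : Fin m → ℝ) ⬝ᵥ (M *ᵥ (ρ * u t)))
        ((1 : Fin m → ℝ) ⬝ᵥ (M *ᵥ (D1 *ᵥ σ))) t := by
      have hcomp := (hasDerivAt_pi).1 (hu t)
      have : HasDerivAt (fun t => (1 : Fin m → ℝ) ⬝ᵥ (M *ᵥ (ρ * u t)))
          (∑ i, ∑ j, M i j * (ρ j * ((ρ j)⁻¹ * (D1 *ᵥ σ) j))) t := by
        simp only [dotProduct, mulVec, Pi.one_apply, one_mul, Pi.mul_apply]
        exact HasDerivAt.fun_sum fun i _ => HasDerivAt.fun_sum fun j _ =>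
          (((hcomp j).const_mul (ρ j)).const_mul (M i j))
      convert this using 1
      simp only [dotProduct, mulVec, Pi.one_apply, one_mul]
      congr 1
      ext i
      congr 1
      ext j
      rw [mul_inv_cancel_left₀ (hρ j).ne']
    have hzero : (1 : Fin m → ℝ) ⬝ᵥ (M *ᵥ (D1 *ᵥ σ)) = 0 := by
      rw [dotProduct_mulVec, dotProduct_mulVec, vecMul_vecMul] at *
      rw [hMD1, zero_dotProduct]
    rwa [hzero] at hmain
  intro t₁ t₂
  exact is_const_of_deriv_eq_zero
    (fun t => (hf t).differentiableAt) (fun t => (hf t).deriv) t₁ t₂
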